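/- Let α*(ψ) be the largest solution of (α+1)·log(α+1) − α·log α + (α−1)·log ψ = 0 for ψ ∈ (0,1). Then α*(ψ) → 1 as ψ → 0⁺ and α*(ψ) → ∞ as ψ → 1⁻. -/

import Mathlib

open Filter Real

lemma gg_pos {α : ℝ} (hα : 0 < α) :
    0 < (α+1)*Real.log (α+1) - α*Real.log α := by
  have h1 : Real.log α < Real.log (α+1) := Real.log_lt_log hα (by linarith)
  have h2 : 0 < Real.log (α+1) := Real.log_pos (by linarith)
  nlinarith [mul_pos hα (sub_pos.2 h1)]

lemma gg_le {α : ℝ} (hα : 0 < α) :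
    (α+1)*Real.log (α+1) - α*Real.log α ≤ 1 + Real.log (α+1) := by
  have h2 : Real.log ((α+1)/α) = Real.log (α+1) - Real.log α :=
    Real.log_div (by linarith) (ne_of_gt hα)
  have h1 : Real.log ((α+1)/α) ≤ (α+1)/α - 1 := Real.log_le_sub_one_of_pos (by positivity)
  rw [h2] at h1
  have h3 : (α+1)/α - 1 = 1/α := by field_simp; ring
  rw [h3] at h1
  have h4 : α * (Real.log (α+1) - Real.log α) ≤ α * (1/α) :=
    mul_le_mul_of_nonneg_left h1 hα.le
  have h5 : α * (1/α) = 1 := by field_simp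
  nlinarith

lemma exists_root_ge (ψ M : ℝ) (hψ0 : 0 < ψ) (hψ1 : ψ < 1) (hM : 2 ≤ M)
    (hL : -Real.log ψ < ((M+1)*Real.log (M+1) - M*Real.log M)/(M-1)) :
    ∃ β, 0 < β ∧ (β+1)*Real.log (β+1) - β*Real.log β + (β-1)*Real.log ψ = 0 ∧ M ≤ β := by
  set L : ℝ := -Real.log ψ with hLdef
  have hL0 : 0 < L := by
    have := Real.log_neg hψ0 hψ1; simp only [hLdef]; linarith
  set f : ℝ → ℝ := fun α => (α+1)*Real.log (α+1) - α*Real.log α + (α-1)*Real.log ψ with hf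
  have hM1 : (0:ℝ) < M - 1 := by linarith
  have hfM : 0 < f M := by
    have h := (lt_div_iff₀ hM1).1 hL
    have hlψ : Real.log ψ = -L := by simp [hLdef]
    simp only [hf, hlψ]
    nlinarith
  set t : ℝ := max (max (4/L) ((1+2*L)/2 + 1)) (M+1) with ht
  have ht1 : M + 1 ≤ t := le_max_right _ _
  have ht4 : 4/L ≤ t := le_trans (le_max_left _ _) (le_max_left _ _)
  have ht5 : (1+2*L)/2 + 1 ≤ t := le_trans (le_max_right _ _) (le_max_left _ _)
  have htpos : 0 < t := by linarith
  set α₁ : ℝ := t^2 - 1 with hα₁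
  have hα₁M : M ≤ α₁ := by nlinarith
  have hα₁pos : 0 < α₁ := by linarith
  have hfα₁ : f α₁ < 0 := by
    have hle := gg_le hα₁pos
    have hlog : Real.log (α₁+1) = 2 * Real.log t := by
      rw [show α₁ + 1 = t^2 by ring, Real.log_pow]
      push_cast; ring
    have hlt : Real.log t ≤ t - 1 := Real.log_le_sub_one_of_pos htpos
    have h4t : 4 ≤ L * t := by
      rw [div_le_iff₀ hL0] at ht4; linarith [ht4]
    have h4t2 : 4 * t ≤ L * t^2 := by nlinarith
    have hlψ : Real.log ψ = -L := by simp [hLdef]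
    simp only [hf, hlψ]
    nlinarith [hle, hlog]
  have hcont : ContinuousOn f (Set.Icc M α₁) := by
    intro x hx
    have hx0 : (0:ℝ) < x := lt_of_lt_of_le (by linarith) hx.1
    apply ContinuousAt.continuousWithinAt
    have hl1 : ContinuousAt (fun α : ℝ => Real.log (α+1)) x :=
      (Real.continuousAt_log (by positivity)).comp (continuousAt_id.add continuousAt_const)
    have hl2 : ContinuousAt (fun α : ℝ => Real.log α) x := Real.continuousAt_log hx0.ne'
    exact (((continuousAt_id.add continuousAt_const).mul hl1).sub
      (continuousAt_id.mul hl2)).add ((continuousAt_id.sub continuousAt_const).mul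
      continuousAt_const)
  have hMα₁ : M ≤ α₁ := hα₁M
  have h0mem : (0:ℝ) ∈ Set.Icc (f α₁) (f M) := ⟨hfα₁.le, hfM.le⟩
  obtain ⟨β, hβmem, hβeq⟩ := intermediate_value_Icc' hMα₁ hcont h0mem
  exact ⟨β, lt_of_lt_of_le (by linarith) hβmem.1, hβeq, hβmem.1⟩

/-- `α*(ψ)`, the largest positive solution of
`(α+1)·log(α+1) − α·log α + (α−1)·log ψ = 0`, tends to `1` as `ψ → 0⁺` and
to `∞` as `ψ → 1⁻`. -/
theorem alphaStar_limits
    (αStar : ℝ → ℝ)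
    (hroot : ∀ ψ ∈ Set.Ioo (0 : ℝ) 1,
      0 < αStar ψ ∧
      (αStar ψ + 1) * Real.log (αStar ψ + 1) - αStar ψ * Real.log (αStar ψ)
        + (αStar ψ - 1) * Real.log ψ = 0 ∧
      ∀ β : ℝ, 0 < β →
        (β + 1) * Real.log (β + 1) - β * Real.log β + (β - 1) * Real.log ψ = 0 →
        β ≤ αStar ψ) :
    Tendsto αStar (nhdsWithin 0 (Set.Ioo 0 1)) (nhds 1) ∧
    Tendsto αStar (nhdsWithin 1 (Set.Ioo 0 1)) atTop := by
  constructor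
  · rw [Metric.tendsto_nhdsWithin_nhds]
    intro ε hε
    refine ⟨Real.exp (-(1 + 4/ε)), Real.exp_pos _, ?_⟩
    intro ψ hψ hdist
    obtain ⟨h0, h1⟩ := hψ
    obtain ⟨hpos, heq, _⟩ := hroot ψ ⟨h0, h1⟩
    set α := αStar ψ with hα
    have hψδ : ψ < Real.exp (-(1 + 4/ε)) := by
      rwa [Real.dist_eq, sub_zero, abs_of_pos h0] at hdist
    have hlog : Real.log ψ < -(1 + 4/ε) := by
      calc Real.log ψ < Real.log (Real.exp (-(1 + 4/ε))) := Real.log_lt_log h0 hψδ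
      _ = -(1 + 4/ε) := Real.log_exp _
    have hα1 : 1 < α := by
      by_contra h
      push_neg at h
      have hg := gg_pos hpos
      have hψneg : Real.log ψ < 0 := Real.log_neg h0 h1
      have hnn : 0 ≤ (α - 1) * Real.log ψ := by nlinarith
      linarith
    have hgle := gg_le hpos
    have hlog2 : Real.log (α+1) ≤ α := by
      have := Real.log_le_sub_one_of_pos (show (0:ℝ) < α+1 by linarith)
      linarith
    -- (α-1)*(-log ψ) = g α ≤ 1 + α
    have key : (α-1)*(-(Real.log ψ) - 1) ≤ 2 := by nlinarith
    have hε4 : 0 < 4/ε := by positivity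
    have hB : 4/ε < -Real.log ψ - 1 := by linarith
    have hA : 0 < α - 1 := by linarith
    have hAB : (α-1) * (4/ε) < 2 :=
      lt_of_lt_of_le (by nlinarith) key
    have hαε : α - 1 < ε := by
      have h4 : (4/ε) * ε = 4 := div_mul_cancel₀ 4 (ne_of_gt hε)
      nlinarith
    rw [Real.dist_eq, abs_of_pos (by linarith : (0:ℝ) < α - 1)]
    linarith
  · rw [tendsto_atTop]
    intro b
    set M : ℝ := max b 2 with hM
    have hM2 : (2:ℝ) ≤ M := le_max_right _ _
    have hbM : b ≤ M := le_max_left _ _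
    set c : ℝ := ((M+1)*Real.log (M+1) - M*Real.log M)/(M-1) with hc
    have hc0 : 0 < c := div_pos (gg_pos (by linarith)) (by linarith)
    have hδ0 : Real.exp (-c) < 1 := by
      rw [Real.exp_lt_one_iff]; linarith
    rw [eventually_nhdsWithin_iff, Metric.eventually_nhds_iff]
    refine ⟨1 - Real.exp (-c), by linarith, ?_⟩
    intro ψ hdist hψ
    obtain ⟨h0, h1⟩ := hψ
    have hψδ : Real.exp (-c) < ψ := by
      rw [Real.dist_eq, abs_lt] at hdist
      linarith [hdist.1]
    have hlog : -Real.log ψ < c := by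
      have := Real.log_lt_log (Real.exp_pos _) hψδ
      rw [Real.log_exp] at this
      linarith
    obtain ⟨β, hβ0, hβeq, hβM⟩ := exists_root_ge ψ M h0 h1 hM2 hlog
    obtain ⟨-, -, hmax⟩ := hroot ψ ⟨h0, h1⟩
    exact le_trans hbM (le_trans hβM (hmax β hβ0 hβeq))
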